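/- Let X, Y be finite sets and E the optimal transport cost with finite cost c. For any probability mass functions P_X, P_Y, any n ≥ 1, and any α ∈ ℝ, Strassen's optimal excess-cost probability for product measures satisfies the nested formula: inf over couplings P_{X^nY^n} of (P_X^n, P_Y^n) of P{c_n(X^n, Y^n) > α} = inf over couplings π of (μ, ν) of π{(T_X, T_Y) : E(T_X, T_Y) > α}, where μ (resp. ν) is the distribution of the empirical measure of an i.i.d. sample of size n from P_X (resp. P_Y), and c_n(x^n,y^n) = (1/n)Σ_i c(x_i,y_i). -/

import Mathlib

open Finset
open scoped Classical

/-- `p` is a probability mass function on a finite set. -/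
def IsPMF {X : Type*} [Fintype X] (p : X → ℝ) : Prop :=
  (∀ x, 0 ≤ p x) ∧ ∑ x, p x = 1

/-- `π` is a coupling of the probability mass functions `pX` and `pY`. -/
def IsCoupling {X Y : Type*} [Fintype X] [Fintype Y]
    (pX : X → ℝ) (pY : Y → ℝ) (π : X × Y → ℝ) : Prop :=
  IsPMF π ∧ (∀ x, ∑ y, π (x, y) = pX x) ∧ (∀ y, ∑ x, π (x, y) = pY y)

/-- The optimal transport cost between two probability mass functions. -/
noncomputable def OTCost {X Y : Type*} [Fintype X] [Fintype Y]
    (c : X × Y → ℝ) (pX : X → ℝ) (pY : Y → ℝ) : ℝ :=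
  sInf {r | ∃ π, IsCoupling pX pY π ∧ r = ∑ z, π z * c z}

namespace Stmt13Aux

variable {n : ℕ}

variable {n : ℕ}

/-- empirical measure of a tuple -/
noncomputable def emp {Z : Type*} [DecidableEq Z] (f : Fin n → Z) : Z → ℝ :=
  fun z => ((Finset.univ.filter fun i => f i = z).card : ℝ) / n

lemma card_filter_real {Z : Type*} [DecidableEq Z] (f : Fin n → Z) (z : Z) :
    ((Finset.univ.filter fun i => f i = z).card : ℝ) = ∑ i, if f i = z then (1:ℝ) else 0 := by
  rw [Finset.card_filter]
  push_cast
  rfl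

lemma sum_cnt_mul {Z : Type*} [Fintype Z] [DecidableEq Z] (f : Fin n → Z) (F : Z → ℝ) :
    ∑ z, ((Finset.univ.filter fun i => f i = z).card : ℝ) * F z = ∑ i, F (f i) := by
  simp_rw [card_filter_real, Finset.sum_mul, ite_mul, one_mul, zero_mul]
  rw [Finset.sum_comm]
  refine Finset.sum_congr rfl fun i _ => ?_
  simp

lemma sum_cnt {Z : Type*} [Fintype Z] [DecidableEq Z] (f : Fin n → Z) :
    ∑ z, ((Finset.univ.filter fun i => f i = z).card : ℝ) = n := by
  have := sum_cnt_mul f (fun _ => (1:ℝ))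
  simpa using this

lemma cnt_comp_perm {Z : Type*} [DecidableEq Z] (f : Fin n → Z) (τ : Equiv.Perm (Fin n)) (z : Z) :
    (Finset.univ.filter fun i => f (τ i) = z).card = (Finset.univ.filter fun i => f i = z).card := by
  refine Finset.card_bij' (fun i _ => τ i) (fun i _ => τ.symm i) ?_ ?_ ?_ ?_ <;>
    simp +contextual [Finset.mem_filter]

lemma emp_comp_perm {Z : Type*} [DecidableEq Z] (f : Fin n → Z) (τ : Equiv.Perm (Fin n)) :
    emp (fun i => f (τ i)) = emp f := by
  funext z
  simp [emp, cnt_comp_perm]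

lemma cnt_eq_of_emp_eq {Z : Type*} [DecidableEq Z] (hn : 0 < n) {f g : Fin n → Z}
    (h : emp f = emp g) (z : Z) :
    (Finset.univ.filter fun i => f i = z).card = (Finset.univ.filter fun i => g i = z).card := by
  have := congrFun h z
  simp only [emp] at this
  have hn' : (n:ℝ) ≠ 0 := Nat.cast_ne_zero.2 hn.ne'
  field_simp at this
  exact_mod_cast this

lemma exists_perm_of_emp_eq {Z : Type*} [DecidableEq Z] (hn : 0 < n) {f g : Fin n → Z}
    (h : emp f = emp g) : ∃ τ : Equiv.Perm (Fin n), ∀ i, g i = f (τ i) := by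
  have hcard : ∀ z : Z, Fintype.card {i // g i = z} = Fintype.card {i // f i = z} := by
    intro z
    rw [Fintype.card_subtype, Fintype.card_subtype]
    exact (cnt_eq_of_emp_eq hn h z).symm
  have e : ∀ z : Z, {i // g i = z} ≃ {i // f i = z} := fun z => Fintype.equivOfCardEq (hcard z)
  let E : Fin n ≃ Fin n :=
    ((Equiv.sigmaFiberEquiv g).symm.trans (Equiv.sigmaCongrRight e)).trans (Equiv.sigmaFiberEquiv f)
  refine ⟨E, fun i => ?_⟩
  have : E i = ((e (g i)) ⟨i, rfl⟩).1 := rfl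
  rw [this]
  exact ((e (g i)) ⟨i, rfl⟩).2.symm

lemma prod_const_on_class {Z : Type*} [DecidableEq Z] (hn : 0 < n) {f g : Fin n → Z}
    (h : emp f = emp g) (p : Z → ℝ) : ∏ i, p (f i) = ∏ i, p (g i) := by
  obtain ⟨τ, hτ⟩ := exists_perm_of_emp_eq hn h
  have : ∏ i, p (g i) = ∏ i, p (f (τ i)) := by
    refine Finset.prod_congr rfl fun i _ => by rw [hτ]
  rw [this, Equiv.prod_comp τ (fun i => p (f i))]

lemma emp_isPMF {Z : Type*} [Fintype Z] [DecidableEq Z] (hn : 0 < n) (f : Fin n → Z) :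
    IsPMF (emp f) := by
  constructor
  · intro z
    exact div_nonneg (Nat.cast_nonneg _) (Nat.cast_nonneg _)
  · have hn' : (n:ℝ) ≠ 0 := Nat.cast_ne_zero.2 hn.ne'
    simp only [emp, div_eq_mul_inv, ← Finset.sum_mul]
    rw [sum_cnt f, mul_inv_cancel₀ hn']


variable {X Y : Type*} [Fintype X] [Fintype Y] [DecidableEq X] [DecidableEq Y]


lemma prod_coupling {pX : X → ℝ} {pY : Y → ℝ} (hX : IsPMF pX) (hY : IsPMF pY) :
    IsCoupling pX pY (fun z => pX z.1 * pY z.2) := by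
  refine ⟨⟨fun z => mul_nonneg (hX.1 _) (hY.1 _), ?_⟩, fun x => ?_, fun y => ?_⟩
  · rw [Fintype.sum_prod_type]
    simp only [← Finset.mul_sum, hY.2, mul_one]
    exact hX.2
  · simp only [← Finset.mul_sum, hY.2, mul_one]
  · simp only [← Finset.sum_mul, hX.2, one_mul]

lemma OTCost_set_nonempty {pX : X → ℝ} {pY : Y → ℝ} (hX : IsPMF pX) (hY : IsPMF pY) (c : X × Y → ℝ) :
    {r | ∃ π, IsCoupling pX pY π ∧ r = ∑ z, π z * c z}.Nonempty :=
  ⟨_, ⟨_, prod_coupling hX hY, rfl⟩⟩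

lemma OTCost_set_bddBelow (c : X × Y → ℝ) (hc : ∀ z, 0 ≤ c z) (pX : X → ℝ) (pY : Y → ℝ) :
    BddBelow {r | ∃ π, IsCoupling pX pY π ∧ r = ∑ z, π z * c z} := by
  refine ⟨0, fun r hr => ?_⟩
  obtain ⟨π, hπ, rfl⟩ := hr
  exact Finset.sum_nonneg fun z _ => mul_nonneg (hπ.1.1 z) (hc z)

/-- the joint empirical measure couples the marginal empirical measures -/
lemma jointEmp_coupling (hn : 0 < n) (xs : Fin n → X) (ys : Fin n → Y) :
    IsCoupling (emp xs) (emp ys) (emp (fun i => (xs i, ys i))) := by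
  refine ⟨emp_isPMF hn _, fun x => ?_, fun y => ?_⟩
  · simp only [emp, div_eq_mul_inv, ← Finset.sum_mul]
    congr 1
    have : ∀ y : Y, ((Finset.univ.filter fun i => (xs i, ys i) = (x, y)).card : ℝ)
        = ∑ i, if xs i = x then (if ys i = y then (1:ℝ) else 0) else 0 := by
      intro y
      rw [card_filter_real]
      refine Finset.sum_congr rfl fun i _ => ?_
      by_cases h1 : xs i = x <;> by_cases h2 : ys i = y <;> simp [Prod.ext_iff, h1, h2]
    simp only [this]
    rw [Finset.sum_comm, card_filter_real]
    refine Finset.sum_congr rfl fun i _ => ?_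
    by_cases h1 : xs i = x <;> simp [h1]
  · simp only [emp, div_eq_mul_inv, ← Finset.sum_mul]
    congr 1
    have : ∀ x : X, ((Finset.univ.filter fun i => (xs i, ys i) = (x, y)).card : ℝ)
        = ∑ i, if ys i = y then (if xs i = x then (1:ℝ) else 0) else 0 := by
      intro x
      rw [card_filter_real]
      refine Finset.sum_congr rfl fun i _ => ?_
      by_cases h1 : xs i = x <;> by_cases h2 : ys i = y <;> simp [Prod.ext_iff, h1, h2]
    simp only [this]
    rw [Finset.sum_comm, card_filter_real]
    refine Finset.sum_congr rfl fun i _ => ?_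
    by_cases h1 : ys i = y <;> simp [h1]

lemma jointEmp_cost (hn : 0 < n) (c : X × Y → ℝ) (xs : Fin n → X) (ys : Fin n → Y) :
    ∑ z, emp (fun i => (xs i, ys i)) z * c z = (1 / n : ℝ) * ∑ i, c (xs i, ys i) := by
  simp only [emp, div_eq_mul_inv, mul_comm, ← Finset.mul_sum]
  rw [← sum_cnt_mul (fun i => (xs i, ys i)) c]
  rw [Finset.mul_sum]
  refine Finset.sum_congr rfl fun z _ => by ring

lemma OTCost_le_cn (hn : 0 < n) (c : X × Y → ℝ) (hc : ∀ z, 0 ≤ c z)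
    (xs : Fin n → X) (ys : Fin n → Y) :
    OTCost c (emp xs) (emp ys) ≤ (1 / n : ℝ) * ∑ i, c (xs i, ys i) := by
  apply csInf_le (OTCost_set_bddBelow c hc _ _)
  exact ⟨_, jointEmp_coupling hn xs ys, (jointEmp_cost hn c xs ys).symm⟩



lemma permMatrix_apply (σ : Equiv.Perm (Fin n)) (i j : Fin n) :
    σ.permMatrix ℝ i j = if σ i = j then (1:ℝ) else 0 := by
  simp [Equiv.Perm.permMatrix, PEquiv.toMatrix_apply, Equiv.toPEquiv_apply]

lemma exists_perm_cost_le_coupling (hn : 0 < n) (c : X × Y → ℝ) (hc : ∀ z, 0 ≤ c z)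
    (xs : Fin n → X) (ys : Fin n → Y) (W : X × Y → ℝ)
    (hW : IsCoupling (emp xs) (emp ys) W) :
    ∃ σ : Equiv.Perm (Fin n), (1 / n : ℝ) * ∑ i, c (xs i, ys (σ i)) ≤ ∑ z, W z * c z := by
  classical
  have hn' : (n:ℝ) ≠ 0 := Nat.cast_ne_zero.2 hn.ne'
  set a : X → ℕ := fun x => (Finset.univ.filter fun i => xs i = x).card with ha
  set b : Y → ℕ := fun y => (Finset.univ.filter fun i => ys i = y).card with hb
  have haxs : ∀ i, 0 < a (xs i) := fun i =>
    Finset.card_pos.2 ⟨i, Finset.mem_filter.2 ⟨Finset.mem_univ i, rfl⟩⟩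
  have hbys : ∀ j, 0 < b (ys j) := fun j =>
    Finset.card_pos.2 ⟨j, Finset.mem_filter.2 ⟨Finset.mem_univ j, rfl⟩⟩
  have hW0 : ∀ z, 0 ≤ W z := hW.1.1
  have hWx : ∀ x y, a x = 0 → W (x, y) = 0 := by
    intro x y hx
    have hx' : (Finset.univ.filter fun i => xs i = x).card = 0 := hx
    have h1 : ∑ y, W (x, y) = 0 := by
      rw [hW.2.1 x]; simp [emp, hx']
    have := (Finset.sum_eq_zero_iff_of_nonneg (fun y _ => hW0 (x, y))).1 h1
    exact this y (Finset.mem_univ y)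
  have hWy : ∀ x y, b y = 0 → W (x, y) = 0 := by
    intro x y hy
    have hy' : (Finset.univ.filter fun i => ys i = y).card = 0 := hy
    have h1 : ∑ x, W (x, y) = 0 := by
      rw [hW.2.2 y]; simp [emp, hy']
    have := (Finset.sum_eq_zero_iff_of_nonneg (fun x _ => hW0 (x, y))).1 h1
    exact this x (Finset.mem_univ x)
  set D : Matrix (Fin n) (Fin n) ℝ :=
    fun i j => (n : ℝ) * W (xs i, ys j) / (a (xs i) * b (ys j)) with hD
  have hrow : ∀ i, ∑ j, D i j = 1 := by
    intro i
    have key : ∀ y : Y, ((b y : ℝ)) * ((n : ℝ) * W (xs i, y) / (a (xs i) * b y))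
        = ((n : ℝ) / a (xs i)) * W (xs i, y) := by
      intro y
      by_cases hy : b y = 0
      · rw [hWy _ _ hy, hy]; simp
      · have hb' : (b y : ℝ) ≠ 0 := Nat.cast_ne_zero.2 hy
        have ha' : ((a (xs i)) : ℝ) ≠ 0 := Nat.cast_ne_zero.2 (haxs i).ne'
        field_simp
    calc ∑ j, D i j = ∑ y, (b y : ℝ) * ((n : ℝ) * W (xs i, y) / (a (xs i) * b y)) := by
          rw [← sum_cnt_mul ys (fun y => (n : ℝ) * W (xs i, y) / (a (xs i) * b y))]
      _ = ((n : ℝ) / a (xs i)) * ∑ y, W (xs i, y) := by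
          simp only [key]; rw [Finset.mul_sum]
      _ = 1 := by
          rw [hW.2.1 (xs i)]
          have hai : ((a (xs i) : ℝ)) ≠ 0 := Nat.cast_ne_zero.2 (haxs i).ne'
          simp only [emp, ← ha]
          field_simp
          rfl
  have hcol : ∀ j, ∑ i, D i j = 1 := by
    intro j
    have key : ∀ x : X, ((a x : ℝ)) * ((n : ℝ) * W (x, ys j) / (a x * b (ys j)))
        = ((n : ℝ) / b (ys j)) * W (x, ys j) := by
      intro x
      by_cases hx : a x = 0
      · rw [hWx _ _ hx, hx]; simp
      · have ha' : (a x : ℝ) ≠ 0 := Nat.cast_ne_zero.2 hx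
        have hb' : ((b (ys j)) : ℝ) ≠ 0 := Nat.cast_ne_zero.2 (hbys j).ne'
        field_simp
    calc ∑ i, D i j = ∑ x, (a x : ℝ) * ((n : ℝ) * W (x, ys j) / (a x * b (ys j))) := by
          rw [← sum_cnt_mul xs (fun x => (n : ℝ) * W (x, ys j) / (a x * b (ys j)))]
      _ = ((n : ℝ) / b (ys j)) * ∑ x, W (x, ys j) := by
          simp only [key]; rw [Finset.mul_sum]
      _ = 1 := by
          rw [hW.2.2 (ys j)]
          have hbj : ((b (ys j) : ℝ)) ≠ 0 := Nat.cast_ne_zero.2 (hbys j).ne'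
          simp only [emp, ← hb]
          field_simp
          rfl
  have hDmem : D ∈ doublyStochastic ℝ (Fin n) := by
    rw [mem_doublyStochastic_iff_sum]
    refine ⟨fun i j => ?_, hrow, hcol⟩
    exact div_nonneg (mul_nonneg (Nat.cast_nonneg _) (hW0 _))
      (mul_nonneg (Nat.cast_nonneg _) (Nat.cast_nonneg _))
  -- cost identity
  have hcost : ∑ i, ∑ j, D i j * c (xs i, ys j) = (n : ℝ) * ∑ z, W z * c z := by
    have step1 : ∀ i, ∑ j, D i j * c (xs i, ys j)
        = ∑ y, (b y : ℝ) * ((n : ℝ) * W (xs i, y) / (a (xs i) * b y) * c (xs i, y)) := by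
      intro i
      rw [← sum_cnt_mul ys (fun y => (n : ℝ) * W (xs i, y) / (a (xs i) * b y) * c (xs i, y))]
    have step2 : ∑ i, ∑ y, (b y : ℝ) * ((n : ℝ) * W (xs i, y) / (a (xs i) * b y) * c (xs i, y))
        = ∑ x, (a x : ℝ) * ∑ y, (b y : ℝ) * ((n : ℝ) * W (x, y) / (a x * b y) * c (x, y)) := by
      rw [← sum_cnt_mul xs (fun x => ∑ y, (b y : ℝ) * ((n : ℝ) * W (x, y) / (a x * b y) * c (x, y)))]
    have term : ∀ x y, (a x : ℝ) * ((b y : ℝ) * ((n : ℝ) * W (x, y) / (a x * b y) * c (x, y)))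
        = (n : ℝ) * (W (x, y) * c (x, y)) := by
      intro x y
      by_cases hx : a x = 0
      · rw [hWx _ _ hx, hx]; simp
      by_cases hy : b y = 0
      · rw [hWy _ _ hy, hy]; simp
      have hx' : (a x : ℝ) ≠ 0 := Nat.cast_ne_zero.2 hx
      have hy' : (b y : ℝ) ≠ 0 := Nat.cast_ne_zero.2 hy
      field_simp
    calc ∑ i, ∑ j, D i j * c (xs i, ys j)
        = ∑ x, (a x : ℝ) * ∑ y, (b y : ℝ) * ((n : ℝ) * W (x, y) / (a x * b y) * c (x, y)) := by
          simp only [step1]; exact step2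
      _ = ∑ x, ∑ y, (n : ℝ) * (W (x, y) * c (x, y)) := by
          refine Finset.sum_congr rfl fun x _ => ?_
          rw [Finset.mul_sum]
          exact Finset.sum_congr rfl fun y _ => term x y
      _ = (n : ℝ) * ∑ z, W z * c z := by
          rw [Fintype.sum_prod_type, Finset.mul_sum]
          exact Finset.sum_congr rfl fun x _ => by rw [Finset.mul_sum]
  obtain ⟨w, hw0, hw1, hwD⟩ := exists_eq_sum_perm_of_mem_doublyStochastic hDmem
  set g : Equiv.Perm (Fin n) → ℝ := fun σ => ∑ i, c (xs i, ys (σ i)) with hg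
  have hDij : ∀ i j, D i j = ∑ σ : Equiv.Perm (Fin n), w σ * (if σ i = j then (1:ℝ) else 0) := by
    intro i j
    rw [← hwD, Matrix.sum_apply]
    refine Finset.sum_congr rfl fun σ _ => ?_
    rw [Matrix.smul_apply, permMatrix_apply, smul_eq_mul]
  have hsum : ∑ σ, w σ * g σ = (n : ℝ) * ∑ z, W z * c z := by
    rw [← hcost]
    calc ∑ σ, w σ * g σ = ∑ σ, ∑ i, w σ * c (xs i, ys (σ i)) := by
          simp only [hg, Finset.mul_sum]
      _ = ∑ i, ∑ σ, w σ * c (xs i, ys (σ i)) := Finset.sum_comm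
      _ = ∑ i, ∑ j, D i j * c (xs i, ys j) := by
          refine Finset.sum_congr rfl fun i _ => ?_
          have hterm : ∀ j, D i j * c (xs i, ys j)
              = ∑ σ : Equiv.Perm (Fin n), w σ * (if σ i = j then c (xs i, ys j) else 0) := by
            intro j
            rw [hDij, Finset.sum_mul]
            refine Finset.sum_congr rfl fun σ _ => ?_
            by_cases h : σ i = j <;> simp [h]
          rw [Finset.sum_congr rfl (fun j _ => hterm j), Finset.sum_comm]
          refine Finset.sum_congr rfl fun σ _ => ?_
          simp [← Finset.mul_sum, Finset.sum_ite_eq]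
  have hne : (Finset.univ : Finset (Equiv.Perm (Fin n))).Nonempty := ⟨1, Finset.mem_univ 1⟩
  obtain ⟨σ₀, -, hσ₀⟩ := Finset.exists_mem_eq_inf' hne g
  refine ⟨σ₀, ?_⟩
  have hmin : Finset.univ.inf' hne g ≤ (n:ℝ) * ∑ z, W z * c z := by
    rw [← hsum]
    calc Finset.univ.inf' hne g = (∑ σ, w σ) * Finset.univ.inf' hne g := by rw [hw1, one_mul]
      _ = ∑ σ, w σ * Finset.univ.inf' hne g := by rw [Finset.sum_mul]
      _ ≤ ∑ σ, w σ * g σ := Finset.sum_le_sum fun σ _ =>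
          mul_le_mul_of_nonneg_left (Finset.inf'_le g (Finset.mem_univ σ)) (hw0 σ)
  rw [hσ₀] at hmin
  have hnpos : (0:ℝ) < n := by exact_mod_cast hn
  rw [one_div, inv_mul_eq_div, div_le_iff₀ hnpos, mul_comm]
  exact hmin

lemma exists_perm_le_OTCost (hn : 0 < n) (c : X × Y → ℝ) (hc : ∀ z, 0 ≤ c z)
    (xs : Fin n → X) (ys : Fin n → Y) :
    ∃ σ : Equiv.Perm (Fin n),
      (1 / n : ℝ) * ∑ i, c (xs i, ys (σ i)) ≤ OTCost c (emp xs) (emp ys) := by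
  classical
  set g : Equiv.Perm (Fin n) → ℝ := fun σ => (1 / n : ℝ) * ∑ i, c (xs i, ys (σ i)) with hg
  have hne : (Finset.univ : Finset (Equiv.Perm (Fin n))).Nonempty := ⟨1, Finset.mem_univ 1⟩
  obtain ⟨σ₀, -, hσ₀⟩ := Finset.exists_mem_eq_inf' hne g
  have hle : Finset.univ.inf' hne g ≤ OTCost c (emp xs) (emp ys) := by
    apply le_csInf (OTCost_set_nonempty (emp_isPMF hn xs) (emp_isPMF hn ys) c)
    rintro r ⟨W, hW, rfl⟩
    obtain ⟨σ, hσ⟩ := exists_perm_cost_le_coupling hn c hc xs ys W hW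
    exact le_trans (Finset.inf'_le g (Finset.mem_univ σ)) hσ
  refine ⟨σ₀, ?_⟩
  calc (1 / n : ℝ) * ∑ i, c (xs i, ys (σ₀ i)) = g σ₀ := rfl
    _ = Finset.univ.inf' hne g := hσ₀.symm
    _ ≤ _ := hle

section PermCount

variable {W V : Type*} [DecidableEq W] [DecidableEq V]

lemma permCount_pair_total [Fintype W] [Fintype V] (a : Fin n → W) (b : Fin n → V) :
    ∑ p : (Fin n → W) × (Fin n → V),
      (Finset.univ.filter fun τ : Equiv.Perm (Fin n) =>
        p.1 = (fun i => a (τ i)) ∧ p.2 = (fun i => b (τ i))).card = n.factorial := by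
  simp_rw [Finset.card_filter]
  rw [Finset.sum_comm]
  have h1 : ∀ τ : Equiv.Perm (Fin n),
      ∑ p : (Fin n → W) × (Fin n → V),
        (if p.1 = (fun i => a (τ i)) ∧ p.2 = (fun i => b (τ i)) then 1 else 0) = 1 := by
    intro τ
    have : ∀ p : (Fin n → W) × (Fin n → V),
        (if p.1 = (fun i => a (τ i)) ∧ p.2 = (fun i => b (τ i)) then (1:ℕ) else 0)
        = (if p = ((fun i => a (τ i)), (fun i => b (τ i))) then 1 else 0) := by
      intro p
      congr 1
      simp [Prod.ext_iff]
    simp_rw [this]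
    rw [Finset.sum_ite_eq' Finset.univ]
    simp
  simp_rw [h1]
  simp [Fintype.card_perm]

lemma permCount_pair_fst [Fintype V] (a : Fin n → W) (b : Fin n → V) (xs : Fin n → W) :
    ∑ ys : Fin n → V,
      (Finset.univ.filter fun τ : Equiv.Perm (Fin n) =>
        xs = (fun i => a (τ i)) ∧ ys = (fun i => b (τ i))).card
    = (Finset.univ.filter fun τ : Equiv.Perm (Fin n) => xs = (fun i => a (τ i))).card := by
  simp_rw [Finset.card_filter]
  rw [Finset.sum_comm]
  refine Finset.sum_congr rfl fun τ _ => ?_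
  by_cases h : xs = (fun i => a (τ i))
  · simp only [h, true_and]
    rw [Finset.sum_ite_eq' Finset.univ]
    simp
  · simp [h]

lemma permCount_pair_snd [Fintype W] (a : Fin n → W) (b : Fin n → V) (ys : Fin n → V) :
    ∑ xs : Fin n → W,
      (Finset.univ.filter fun τ : Equiv.Perm (Fin n) =>
        xs = (fun i => a (τ i)) ∧ ys = (fun i => b (τ i))).card
    = (Finset.univ.filter fun τ : Equiv.Perm (Fin n) => ys = (fun i => b (τ i))).card := by
  simp_rw [Finset.card_filter]
  rw [Finset.sum_comm]
  refine Finset.sum_congr rfl fun τ _ => ?_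
  by_cases h : ys = (fun i => b (τ i))
  · simp only [h, and_true]
    rw [Finset.sum_ite_eq' Finset.univ]
    simp
  · simp [h]

lemma emp_eq_of_permCount_ne_zero (a xs : Fin n → W)
    (h : (Finset.univ.filter fun τ : Equiv.Perm (Fin n) => xs = (fun i => a (τ i))).card ≠ 0) :
    emp xs = emp a := by
  obtain ⟨τ, hτ⟩ := Finset.card_pos.1 (Nat.pos_of_ne_zero h)
  rw [Finset.mem_filter] at hτ
  rw [hτ.2]
  exact emp_comp_perm a τ

lemma permCount_const (hn : 0 < n) (a xs xs' : Fin n → W) (h : emp xs = emp xs') :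
    (Finset.univ.filter fun τ : Equiv.Perm (Fin n) => xs = (fun i => a (τ i))).card
    = (Finset.univ.filter fun τ : Equiv.Perm (Fin n) => xs' = (fun i => a (τ i))).card := by
  obtain ⟨ρ, hρ⟩ := exists_perm_of_emp_eq hn h
  refine Finset.card_bij' (fun τ _ => ρ.trans τ) (fun τ' _ => ρ.symm.trans τ') ?_ ?_ ?_ ?_
  · intro τ hτ
    simp only [Finset.mem_filter, Finset.mem_univ, true_and] at hτ ⊢
    funext i
    simp [hρ i, hτ, Equiv.trans_apply]
  · intro τ' hτ'
    simp only [Finset.mem_filter, Finset.mem_univ, true_and] at hτ' ⊢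
    funext i
    have hmem := congrFun hτ' (ρ.symm i)
    have h2 := hρ (ρ.symm i)
    rw [Equiv.apply_symm_apply] at h2
    rw [← h2, hmem]
    simp [Equiv.trans_apply]
  · intro τ _; ext i; simp
  · intro τ _; ext i; simp

lemma permCount_sum [Fintype W] (a : Fin n → W) :
    ∑ xs : Fin n → W,
      (Finset.univ.filter fun τ : Equiv.Perm (Fin n) => xs = (fun i => a (τ i))).card
    = n.factorial := by
  simp_rw [Finset.card_filter]
  rw [Finset.sum_comm]
  have h1 : ∀ τ : Equiv.Perm (Fin n),
      ∑ xs : Fin n → W, (if xs = (fun i => a (τ i)) then (1:ℕ) else 0) = 1 := by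
    intro τ
    rw [Finset.sum_ite_eq' Finset.univ]
    simp
  simp_rw [h1]
  simp [Fintype.card_perm]

lemma permCount_mul_classCard [Fintype W] (hn : 0 < n) (a xs : Fin n → W) (h : emp xs = emp a) :
    (Finset.univ.filter fun τ : Equiv.Perm (Fin n) => xs = (fun i => a (τ i))).card
      * (Finset.univ.filter fun xs' : Fin n → W => emp xs' = emp a).card = n.factorial := by
  have key : ∑ xs' : Fin n → W,
      (Finset.univ.filter fun τ : Equiv.Perm (Fin n) => xs' = (fun i => a (τ i))).card
      = ∑ xs' ∈ (Finset.univ.filter fun xs' : Fin n → W => emp xs' = emp a),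
        (Finset.univ.filter fun τ : Equiv.Perm (Fin n) => xs' = (fun i => a (τ i))).card := by
    rw [Finset.sum_filter]
    refine Finset.sum_congr rfl fun xs' _ => ?_
    by_cases hx : emp xs' = emp a
    · simp [hx]
    · simp only [hx, if_false]
      by_contra hne
      exact hx (emp_eq_of_permCount_ne_zero a xs' hne)
  have key2 : ∑ xs' ∈ (Finset.univ.filter fun xs' : Fin n → W => emp xs' = emp a),
      (Finset.univ.filter fun τ : Equiv.Perm (Fin n) => xs' = (fun i => a (τ i))).card
      = (Finset.univ.filter fun xs' : Fin n → W => emp xs' = emp a).card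
        * (Finset.univ.filter fun τ : Equiv.Perm (Fin n) => xs = (fun i => a (τ i))).card := by
    rw [Finset.sum_congr rfl (fun xs' hx => ?_), Finset.sum_const, smul_eq_mul]
    exact (permCount_const hn a xs' xs
      (((Finset.mem_filter.1 hx).2.trans h.symm))).symm ▸ rfl
  rw [mul_comm, ← key2, ← key, permCount_sum]

end PermCount

lemma image_swap {Γ Δ : Type*} [Fintype Γ] [DecidableEq Δ]
    (h : Γ → Δ) (π : Γ → ℝ) (e : Δ → Prop) [DecidablePred e] :
    ∑ T ∈ Finset.image h Finset.univ,
      (if e T then (∑ p, if h p = T then π p else 0) else 0)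
    = ∑ p, if e (h p) then π p else 0 := by
  have step : ∀ T ∈ Finset.image h Finset.univ,
      (if e T then (∑ p, if h p = T then π p else 0) else 0)
      = ∑ p, if h p = T then (if e T then π p else 0) else 0 := by
    intro T _
    by_cases he : e T
    · simp only [he, if_true]
    · simp [he]
  rw [Finset.sum_congr rfl step, Finset.sum_comm]
  refine Finset.sum_congr rfl fun p _ => ?_
  rw [Finset.sum_ite_eq (Finset.image h Finset.univ) (h p) (fun T => if e T then π p else 0)]
  rw [if_pos (Finset.mem_image_of_mem _ (Finset.mem_univ p))]

end Stmt13Aux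

open Stmt13Aux in
set_option maxHeartbeats 1600000 in
theorem stmt13 {X Y : Type*} [Fintype X] [Fintype Y] [DecidableEq X] [DecidableEq Y]
    (c : X × Y → ℝ) (hc : ∀ z, 0 ≤ c z)
    (pX : X → ℝ) (pY : Y → ℝ) (hpX : IsPMF pX) (hpY : IsPMF pY)
    (n : ℕ) (hn : 0 < n) (α : ℝ)
    (empX : (Fin n → X) → X → ℝ)
    (hempX : ∀ xs x, empX xs x = ((Finset.univ.filter fun i => xs i = x).card : ℝ) / n)
    (empY : (Fin n → Y) → Y → ℝ)
    (hempY : ∀ ys y, empY ys y = ((Finset.univ.filter fun i => ys i = y).card : ℝ) / n)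
    (μ : (X → ℝ) → ℝ)
    (hμ : ∀ T, μ T = ∑ xs : Fin n → X, if empX xs = T then ∏ i, pX (xs i) else 0)
    (ν : (Y → ℝ) → ℝ)
    (hν : ∀ T, ν T = ∑ ys : Fin n → Y, if empY ys = T then ∏ i, pY (ys i) else 0) :
    sInf {r | ∃ π : (Fin n → X) × (Fin n → Y) → ℝ,
        IsCoupling (fun xs => ∏ i, pX (xs i)) (fun ys => ∏ i, pY (ys i)) π ∧
        r = ∑ p, if α < (1 / n : ℝ) * ∑ i, c (p.1 i, p.2 i) then π p else 0}
    = sInf {r | ∃ q : ((X → ℝ) × (Y → ℝ)) →₀ ℝ,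
        (∀ p, 0 ≤ q p) ∧
        (q.sum fun _ v => v) = 1 ∧
        (∀ T, (q.sum fun p v => if p.1 = T then v else 0) = μ T) ∧
        (∀ T, (q.sum fun p v => if p.2 = T then v else 0) = ν T) ∧
        r = q.sum fun p v => if α < OTCost c p.1 p.2 then v else 0} := by
  classical
  have hEX : empX = fun xs => Stmt13Aux.emp xs := funext fun xs => funext fun x => hempX xs x
  have hEY : empY = fun ys => Stmt13Aux.emp ys := funext fun ys => funext fun y => hempY ys y
  subst hEX hEY
  -- abbreviations
  set Aset : Set ℝ := {r | ∃ π : (Fin n → X) × (Fin n → Y) → ℝ,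
        IsCoupling (fun xs => ∏ i, pX (xs i)) (fun ys => ∏ i, pY (ys i)) π ∧
        r = ∑ p, if α < (1 / n : ℝ) * ∑ i, c (p.1 i, p.2 i) then π p else 0} with hAset
  set Bset : Set ℝ := {r | ∃ q : ((X → ℝ) × (Y → ℝ)) →₀ ℝ,
        (∀ p, 0 ≤ q p) ∧
        (q.sum fun _ v => v) = 1 ∧
        (∀ T, (q.sum fun p v => if p.1 = T then v else 0) = μ T) ∧
        (∀ T, (q.sum fun p v => if p.2 = T then v else 0) = ν T) ∧
        r = q.sum fun p v => if α < OTCost c p.1 p.2 then v else 0} with hBset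
  have hAbdd : BddBelow Aset := by
    refine ⟨0, ?_⟩
    rintro r ⟨π, hπ, rfl⟩
    exact Finset.sum_nonneg fun p _ => by split_ifs; exacts [hπ.1.1 p, le_refl 0]
  have hBbdd : BddBelow Bset := by
    refine ⟨0, ?_⟩
    rintro r ⟨q, hq0, _, _, _, rfl⟩
    rw [Finsupp.sum]
    exact Finset.sum_nonneg fun t _ => by split_ifs; exacts [hq0 t, le_refl 0]
  have dir1 : ∀ r ∈ Aset, ∃ s ∈ Bset, s ≤ r := by
    rintro r ⟨π, hπ, rfl⟩
    set h : (Fin n → X) × (Fin n → Y) → ((X → ℝ) × (Y → ℝ)) :=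
      fun p => (emp p.1, emp p.2) with hh
    set S : Finset ((X → ℝ) × (Y → ℝ)) := Finset.image h Finset.univ with hS
    set f : ((X → ℝ) × (Y → ℝ)) → ℝ :=
      fun T => ∑ p : (Fin n → X) × (Fin n → Y), if h p = T then π p else 0 with hf
    have hsupp : ∀ T, f T ≠ 0 → T ∈ S := by
      intro T hT
      by_contra hTS
      apply hT
      refine Finset.sum_eq_zero fun p _ => ?_
      rw [if_neg]
      intro hEq
      exact hTS (hEq ▸ Finset.mem_image_of_mem _ (Finset.mem_univ p))
    set q : ((X → ℝ) × (Y → ℝ)) →₀ ℝ := Finsupp.onFinset S f hsupp with hq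
    have happly : ∀ T, q T = f T := fun T => rfl
    have hqsum : ∀ g : ((X → ℝ) × (Y → ℝ)) → ℝ → ℝ, (∀ T, g T 0 = 0) →
        q.sum g = ∑ T ∈ S, g T (f T) := by
      intro g hg
      rw [Finsupp.sum_of_support_subset q Finsupp.support_onFinset_subset g
        (fun T _ => hg T)]
      exact Finset.sum_congr rfl fun T _ => by rw [happly]
    refine ⟨_, ⟨q, ?_, ?_, ?_, ?_, rfl⟩, ?_⟩
    · intro T
      rw [happly]
      exact Finset.sum_nonneg fun p _ => by split_ifs; exacts [hπ.1.1 p, le_refl 0]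
    · rw [hqsum _ (fun _ => rfl)]
      calc ∑ T ∈ S, f T = ∑ T ∈ S, if (fun _ : (X → ℝ) × (Y → ℝ) => True) T then f T else 0 := by
            simp
        _ = ∑ p, if (fun _ : (X → ℝ) × (Y → ℝ) => True) (h p) then π p else 0 :=
            image_swap h π _
        _ = 1 := by rw [← hπ.1.2]; simp
    · intro T
      rw [hqsum _ (fun T' => by split_ifs <;> rfl)]
      calc ∑ T' ∈ S, (if T'.1 = T then f T' else 0)
          = ∑ p, if (fun T' : (X → ℝ) × (Y → ℝ) => T'.1 = T) (h p) then π p else 0 :=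
            image_swap h π _
        _ = μ T := by
            rw [hμ T, Fintype.sum_prod_type]
            refine Finset.sum_congr rfl fun xs _ => ?_
            by_cases hx : emp xs = T
            · simp only [hh, hx, if_true, if_pos]
              exact hπ.2.1 xs
            · simp [hh, hx]
    · intro T
      rw [hqsum _ (fun T' => by split_ifs <;> rfl)]
      calc ∑ T' ∈ S, (if T'.2 = T then f T' else 0)
          = ∑ p, if (fun T' : (X → ℝ) × (Y → ℝ) => T'.2 = T) (h p) then π p else 0 :=
            image_swap h π _
        _ = ν T := by
            rw [hν T, Fintype.sum_prod_type]
            rw [Finset.sum_comm]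
            refine Finset.sum_congr rfl fun ys _ => ?_
            by_cases hy : emp ys = T
            · simp only [hh, hy, if_true, if_pos]
              exact hπ.2.2 ys
            · simp [hh, hy]
    · rw [hqsum _ (fun T' => by split_ifs <;> rfl)]
      calc ∑ T' ∈ S, (if α < OTCost c T'.1 T'.2 then f T' else 0)
          = ∑ p, if (fun T' : (X → ℝ) × (Y → ℝ) => α < OTCost c T'.1 T'.2) (h p) then π p else 0 :=
            image_swap h π _
        _ ≤ ∑ p, if α < (1 / n : ℝ) * ∑ i, c (p.1 i, p.2 i) then π p else 0 := by
            refine Finset.sum_le_sum fun p _ => ?_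
            by_cases hOT : α < OTCost c (emp p.1) (emp p.2)
            · rw [if_pos (by simpa [hh] using hOT),
                if_pos (lt_of_lt_of_le hOT (OTCost_le_cn hn c hc p.1 p.2))]
            · rw [if_neg (by simpa [hh] using hOT)]
              split_ifs
              exacts [hπ.1.1 p, le_refl 0]
  have dir2 : ∀ r ∈ Bset, ∃ s ∈ Aset, s ≤ r := by
    rintro r ⟨q, hq0, hq1, hqμ, hqν, rfl⟩
    have hXne : Nonempty X := by
      by_contra hne
      rw [not_nonempty_iff] at hne
      have h2 := hpX.2
      rw [Finset.univ_eq_empty, Finset.sum_empty] at h2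
      norm_num at h2
    have hYne : Nonempty Y := by
      by_contra hne
      rw [not_nonempty_iff] at hne
      have h2 := hpY.2
      rw [Finset.univ_eq_empty, Finset.sum_empty] at h2
      norm_num at h2
    have hfacpos : (0:ℝ) < n.factorial := by exact_mod_cast n.factorial_pos
    have hfacne : (n.factorial : ℝ) ≠ 0 := hfacpos.ne'
    have hrepXex : ∀ T : X → ℝ, μ T ≠ 0 → ∃ xs : Fin n → X, emp xs = T := by
      intro T hT
      by_contra hcon
      push_neg at hcon
      apply hT
      rw [hμ T]
      exact Finset.sum_eq_zero fun xs _ => if_neg (hcon xs)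
    have hrepYex : ∀ T : Y → ℝ, ν T ≠ 0 → ∃ ys : Fin n → Y, emp ys = T := by
      intro T hT
      by_contra hcon
      push_neg at hcon
      apply hT
      rw [hν T]
      exact Finset.sum_eq_zero fun ys _ => if_neg (hcon ys)
    set repX : (X → ℝ) → (Fin n → X) := fun T =>
      if hh : ∃ xs : Fin n → X, emp xs = T then hh.choose
      else fun _ => Classical.arbitrary X with hrepX
    have hrepXspec : ∀ T, (∃ xs : Fin n → X, emp xs = T) → emp (repX T) = T := by
      intro T hT
      rw [hrepX]
      simp only [dif_pos hT]
      exact hT.choose_spec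
    set repY : (Y → ℝ) → (Fin n → Y) := fun T =>
      if hh : ∃ ys : Fin n → Y, emp ys = T then hh.choose
      else fun _ => Classical.arbitrary Y with hrepY
    have hrepYspec : ∀ T, (∃ ys : Fin n → Y, emp ys = T) → emp (repY T) = T := by
      intro T hT
      rw [hrepY]
      simp only [dif_pos hT]
      exact hT.choose_spec
    have hbest : ∀ t : (X → ℝ) × (Y → ℝ), ∃ σ : Equiv.Perm (Fin n),
        (1 / n : ℝ) * ∑ i, c (repX t.1 i, repY t.2 (σ i))
          ≤ OTCost c (emp (repX t.1)) (emp (repY t.2)) :=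
      fun t => exists_perm_le_OTCost hn c hc (repX t.1) (repY t.2)
    choose bσ hbσ using hbest
    set ry : ((X → ℝ) × (Y → ℝ)) → (Fin n → Y) := fun t i => repY t.2 (bσ t i) with hry
    set N : ((X → ℝ) × (Y → ℝ)) → ((Fin n → X) × (Fin n → Y)) → ℕ := fun t p =>
      (Finset.univ.filter fun τ : Equiv.Perm (Fin n) =>
        p.1 = (fun i => repX t.1 (τ i)) ∧ p.2 = (fun i => ry t (τ i))).card with hN
    set π : ((Fin n → X) × (Fin n → Y)) → ℝ := fun p =>
      ∑ t ∈ q.support, q t * ((N t p : ℝ) / (n.factorial : ℝ)) with hπdef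
    have hπ0 : ∀ p, 0 ≤ π p := fun p => Finset.sum_nonneg fun t _ =>
      mul_nonneg (hq0 t) (div_nonneg (Nat.cast_nonneg _) (Nat.cast_nonneg _))
    have hsuppX : ∀ t ∈ q.support, emp (repX t.1) = t.1 := by
      intro t ht
      apply hrepXspec
      apply hrepXex
      have hμt : μ t.1 = ∑ t' ∈ q.support, if t'.1 = t.1 then q t' else 0 := by
        rw [← hqμ t.1, Finsupp.sum]
      have hle : q t ≤ ∑ t' ∈ q.support, if t'.1 = t.1 then q t' else 0 := by
        have := Finset.single_le_sum (f := fun t' => if t'.1 = t.1 then q t' else 0)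
          (fun t' _ => by split_ifs; exacts [hq0 t', le_refl 0]) ht
        simpa using this
      have hqt : 0 < q t := lt_of_le_of_ne (hq0 t) (Ne.symm (Finsupp.mem_support_iff.1 ht))
      have : 0 < μ t.1 := by rw [hμt]; linarith
      exact this.ne'
    have hsuppY : ∀ t ∈ q.support, emp (repY t.2) = t.2 := by
      intro t ht
      apply hrepYspec
      apply hrepYex
      have hνt : ν t.2 = ∑ t' ∈ q.support, if t'.2 = t.2 then q t' else 0 := by
        rw [← hqν t.2, Finsupp.sum]
      have hle : q t ≤ ∑ t' ∈ q.support, if t'.2 = t.2 then q t' else 0 := by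
        have := Finset.single_le_sum (f := fun t' => if t'.2 = t.2 then q t' else 0)
          (fun t' _ => by split_ifs; exacts [hq0 t', le_refl 0]) ht
        simpa using this
      have hqt : 0 < q t := lt_of_le_of_ne (hq0 t) (Ne.symm (Finsupp.mem_support_iff.1 ht))
      have : 0 < ν t.2 := by rw [hνt]; linarith
      exact this.ne'
    have hsuppRy : ∀ t ∈ q.support, emp (ry t) = t.2 := by
      intro t ht
      have : emp (ry t) = emp (repY t.2) := by
        rw [hry]
        exact emp_comp_perm (repY t.2) (bσ t)
      rw [this]
      exact hsuppY t ht
    have hNtot : ∀ t, (∑ p : (Fin n → X) × (Fin n → Y), (N t p : ℝ)) = (n.factorial : ℝ) := by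
      intro t
      rw [← Nat.cast_sum]
      norm_cast
      simpa only [hN] using permCount_pair_total (repX t.1) (ry t)
    have hπtot : ∑ p, π p = 1 := by
      simp only [hπdef]
      rw [Finset.sum_comm]
      have : ∀ t ∈ q.support, ∑ p : (Fin n → X) × (Fin n → Y),
          q t * ((N t p : ℝ) / (n.factorial : ℝ)) = q t := by
        intro t _
        rw [← Finset.mul_sum, ← Finset.sum_div, hNtot t, div_self hfacne, mul_one]
      rw [Finset.sum_congr rfl this]
      have h12 := hq1
      rw [Finsupp.sum] at h12
      exact h12
    -- X marginal
    have hmargX : ∀ xs : Fin n → X, ∑ ys, π (xs, ys) = ∏ i, pX (xs i) := by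
      intro xs
      have hNX : ∀ t, (∑ ys, (N t (xs, ys) : ℝ))
          = ((Finset.univ.filter fun τ : Equiv.Perm (Fin n) =>
              xs = (fun i => repX t.1 (τ i))).card : ℝ) := by
        intro t
        rw [← Nat.cast_sum]
        norm_cast
        simpa only [hN] using permCount_pair_fst (repX t.1) (ry t) xs
      have hswap : ∑ ys, π (xs, ys)
          = ∑ t ∈ q.support, q t *
            (((Finset.univ.filter fun τ : Equiv.Perm (Fin n) =>
              xs = (fun i => repX t.1 (τ i))).card : ℝ) / (n.factorial : ℝ)) := by
        simp only [hπdef]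
        rw [Finset.sum_comm]
        refine Finset.sum_congr rfl fun t _ => ?_
        rw [← Finset.mul_sum, ← Finset.sum_div, hNX t]
      rw [hswap]
      rw [← Finset.sum_filter_add_sum_filter_not q.support (fun t => t.1 = emp xs)]
      have hzero : ∑ t ∈ q.support.filter (fun t => ¬ t.1 = emp xs), q t *
            (((Finset.univ.filter fun τ : Equiv.Perm (Fin n) =>
              xs = (fun i => repX t.1 (τ i))).card : ℝ) / (n.factorial : ℝ)) = 0 := by
        refine Finset.sum_eq_zero fun t ht => ?_
        rw [Finset.mem_filter] at ht
        have hcard : (Finset.univ.filter fun τ : Equiv.Perm (Fin n) =>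
            xs = (fun i => repX t.1 (τ i))).card = 0 := by
          by_contra hcc
          have h3 := emp_eq_of_permCount_ne_zero (repX t.1) xs hcc
          rw [hsuppX t ht.1] at h3
          exact ht.2 h3.symm
        rw [hcard]
        simp
      rw [hzero, add_zero]
      set T := emp xs with hT
      set NXT : ℕ := (Finset.univ.filter fun τ : Equiv.Perm (Fin n) =>
        xs = (fun i => repX T (τ i))).card with hNXT
      have hcongr : ∑ t ∈ q.support.filter (fun t => t.1 = T), q t *
            (((Finset.univ.filter fun τ : Equiv.Perm (Fin n) =>
              xs = (fun i => repX t.1 (τ i))).card : ℝ) / (n.factorial : ℝ))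
          = (∑ t ∈ q.support.filter (fun t => t.1 = T), q t) * ((NXT : ℝ) / (n.factorial : ℝ)) := by
        rw [Finset.sum_mul]
        refine Finset.sum_congr rfl fun t ht => ?_
        rw [(Finset.mem_filter.1 ht).2]
      rw [hcongr]
      have hμT : ∑ t ∈ q.support.filter (fun t => t.1 = T), q t = μ T := by
        rw [← hqμ T, Finsupp.sum, Finset.sum_filter]
      rw [hμT]
      have hTreal : emp (repX T) = T := hrepXspec T ⟨xs, hT.symm⟩
      have hclass : μ T = ((Finset.univ.filter fun xs' : Fin n → X =>
          emp xs' = emp (repX T)).card : ℝ) * ∏ i, pX (xs i) := by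
        rw [hμ T]
        have hterm : ∀ xs' : Fin n → X, (if emp xs' = T then ∏ i, pX (xs' i) else 0)
            = (if emp xs' = emp (repX T) then ∏ i, pX (xs i) else 0) := by
          intro xs'
          rw [hTreal]
          by_cases hx : emp xs' = T
          · rw [if_pos hx, if_pos hx]
            exact prod_const_on_class hn (hx.trans hT) pX
          · rw [if_neg hx, if_neg hx]
        calc ∑ xs' : Fin n → X, (if emp xs' = T then ∏ i, pX (xs' i) else 0)
            = ∑ xs' : Fin n → X, (if emp xs' = emp (repX T) then ∏ i, pX (xs i) else 0) :=
              Finset.sum_congr rfl fun xs' _ => hterm xs'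
          _ = _ := by
              rw [← Finset.sum_filter, Finset.sum_const, nsmul_eq_mul]
      have hNC := permCount_mul_classCard hn (repX T) xs (by rw [hTreal, hT])
      have hNCR : ((NXT : ℝ)) * ((Finset.univ.filter fun xs' : Fin n → X =>
          emp xs' = emp (repX T)).card : ℝ) = (n.factorial : ℝ) := by
        rw [hNXT]
        exact_mod_cast congrArg Nat.cast hNC
      rw [hclass]
      calc ((Finset.univ.filter fun xs' : Fin n → X =>
            emp xs' = emp (repX T)).card : ℝ) * (∏ i, pX (xs i)) * ((NXT : ℝ) / (n.factorial : ℝ))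
          = (∏ i, pX (xs i)) * (((NXT : ℝ) * ((Finset.univ.filter fun xs' : Fin n → X =>
            emp xs' = emp (repX T)).card : ℝ)) / (n.factorial : ℝ)) := by ring
        _ = ∏ i, pX (xs i) := by rw [hNCR, div_self hfacne, mul_one]
    -- Y marginal
    have hmargY : ∀ ys : Fin n → Y, ∑ xs, π (xs, ys) = ∏ i, pY (ys i) := by
      intro ys
      have hNY : ∀ t, (∑ xs, (N t (xs, ys) : ℝ))
          = ((Finset.univ.filter fun τ : Equiv.Perm (Fin n) =>
              ys = (fun i => ry t (τ i))).card : ℝ) := by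
        intro t
        rw [← Nat.cast_sum]
        norm_cast
        simpa only [hN] using permCount_pair_snd (repX t.1) (ry t) ys
      have hswap : ∑ xs, π (xs, ys)
          = ∑ t ∈ q.support, q t *
            (((Finset.univ.filter fun τ : Equiv.Perm (Fin n) =>
              ys = (fun i => ry t (τ i))).card : ℝ) / (n.factorial : ℝ)) := by
        simp only [hπdef]
        rw [Finset.sum_comm]
        refine Finset.sum_congr rfl fun t _ => ?_
        rw [← Finset.mul_sum, ← Finset.sum_div, hNY t]
      rw [hswap]
      rw [← Finset.sum_filter_add_sum_filter_not q.support (fun t => t.2 = emp ys)]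
      have hzero : ∑ t ∈ q.support.filter (fun t => ¬ t.2 = emp ys), q t *
            (((Finset.univ.filter fun τ : Equiv.Perm (Fin n) =>
              ys = (fun i => ry t (τ i))).card : ℝ) / (n.factorial : ℝ)) = 0 := by
        refine Finset.sum_eq_zero fun t ht => ?_
        rw [Finset.mem_filter] at ht
        have hcard : (Finset.univ.filter fun τ : Equiv.Perm (Fin n) =>
            ys = (fun i => ry t (τ i))).card = 0 := by
          by_contra hcc
          have h3 := emp_eq_of_permCount_ne_zero (ry t) ys hcc
          rw [hsuppRy t ht.1] at h3
          exact ht.2 h3.symm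
        rw [hcard]
        simp
      rw [hzero, add_zero]
      set T := emp ys with hT
      set C : ℕ := (Finset.univ.filter fun ys' : Fin n → Y => emp ys' = T).card with hC
      have hCpos : 0 < C :=
        Finset.card_pos.2 ⟨ys, Finset.mem_filter.2 ⟨Finset.mem_univ ys, hT.symm⟩⟩
      have hCne : (C : ℝ) ≠ 0 := Nat.cast_ne_zero.2 hCpos.ne'
      apply mul_right_cancel₀ hCne
      have hνT : ∑ t ∈ q.support.filter (fun t => t.2 = T), q t = ν T := by
        rw [← hqν T, Finsupp.sum, Finset.sum_filter]
      have hclass : ν T = (C : ℝ) * ∏ i, pY (ys i) := by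
        rw [hν T]
        have hterm : ∀ ys' : Fin n → Y, (if emp ys' = T then ∏ i, pY (ys' i) else 0)
            = (if emp ys' = T then ∏ i, pY (ys i) else 0) := by
          intro ys'
          by_cases hy : emp ys' = T
          · rw [if_pos hy, if_pos hy]
            exact prod_const_on_class hn (hy.trans hT) pY
          · rw [if_neg hy, if_neg hy]
        calc ∑ ys' : Fin n → Y, (if emp ys' = T then ∏ i, pY (ys' i) else 0)
            = ∑ ys' : Fin n → Y, (if emp ys' = T then ∏ i, pY (ys i) else 0) :=
              Finset.sum_congr rfl fun ys' _ => hterm ys'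
          _ = _ := by
              rw [← Finset.sum_filter, Finset.sum_const, nsmul_eq_mul, hC]
      calc (∑ t ∈ q.support.filter (fun t => t.2 = T), q t *
            (((Finset.univ.filter fun τ : Equiv.Perm (Fin n) =>
              ys = (fun i => ry t (τ i))).card : ℝ) / (n.factorial : ℝ))) * (C : ℝ)
          = ∑ t ∈ q.support.filter (fun t => t.2 = T), q t *
            ((((Finset.univ.filter fun τ : Equiv.Perm (Fin n) =>
              ys = (fun i => ry t (τ i))).card : ℝ) * (C : ℝ)) / (n.factorial : ℝ)) := by
            rw [Finset.sum_mul]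
            exact Finset.sum_congr rfl fun t _ => by ring
        _ = ∑ t ∈ q.support.filter (fun t => t.2 = T), q t := by
            refine Finset.sum_congr rfl fun t ht => ?_
            rw [Finset.mem_filter] at ht
            have hEq : emp (ry t) = T := by rw [hsuppRy t ht.1, ht.2]
            have h4 : emp ys = emp (ry t) := by rw [hEq, hT]
            have h5 := permCount_mul_classCard hn (ry t) ys h4
            have h6 : (Finset.univ.filter fun ys' : Fin n → Y => emp ys' = emp (ry t)).card = C := by
              rw [hC]
              congr 1
              ext ys'
              simp [hEq]
            rw [h6] at h5
            have h7 : (((Finset.univ.filter fun τ : Equiv.Perm (Fin n) =>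
                ys = (fun i => ry t (τ i))).card : ℝ) * (C : ℝ)) = (n.factorial : ℝ) := by
              exact_mod_cast congrArg Nat.cast h5
            rw [h7, div_self hfacne, mul_one]
        _ = ν T := hνT
        _ = (∏ i, pY (ys i)) * (C : ℝ) := by rw [hclass]; ring
    -- cost bound
    have hm : ∀ t ∈ q.support, (1 / n : ℝ) * ∑ i, c (repX t.1 i, ry t i) ≤ OTCost c t.1 t.2 := by
      intro t ht
      have h8 := hbσ t
      rw [hsuppX t ht, hsuppY t ht] at h8
      simpa only [hry] using h8
    refine ⟨_, ⟨π, ⟨⟨hπ0, hπtot⟩, hmargX, hmargY⟩, rfl⟩, ?_⟩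
    have hper : ∀ p : (Fin n → X) × (Fin n → Y),
        (if α < (1 / n : ℝ) * ∑ i, c (p.1 i, p.2 i) then π p else 0)
        = ∑ t ∈ q.support, (if α < (1 / n : ℝ) * ∑ i, c (p.1 i, p.2 i) then
            q t * ((N t p : ℝ) / (n.factorial : ℝ)) else 0) := by
      intro p
      split_ifs with h9
      · simp only [hπdef]
      · rw [Finset.sum_const_zero]
    calc ∑ p, (if α < (1 / n : ℝ) * ∑ i, c (p.1 i, p.2 i) then π p else 0)
        = ∑ t ∈ q.support, ∑ p : (Fin n → X) × (Fin n → Y),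
            (if α < (1 / n : ℝ) * ∑ i, c (p.1 i, p.2 i) then
              q t * ((N t p : ℝ) / (n.factorial : ℝ)) else 0) := by
          rw [Finset.sum_congr rfl (fun p _ => hper p), Finset.sum_comm]
      _ ≤ ∑ t ∈ q.support, (if α < OTCost c t.1 t.2 then q t else 0) := by
          refine Finset.sum_le_sum fun t ht => ?_
          have hinner : ∀ p : (Fin n → X) × (Fin n → Y),
              (if α < (1 / n : ℝ) * ∑ i, c (p.1 i, p.2 i) then
                q t * ((N t p : ℝ) / (n.factorial : ℝ)) else 0)
              ≤ (if α < OTCost c t.1 t.2 then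
                q t * ((N t p : ℝ) / (n.factorial : ℝ)) else 0) := by
            intro p
            by_cases hNz : N t p = 0
            · simp [hNz]
            · have hpos : 0 < (Finset.univ.filter fun τ : Equiv.Perm (Fin n) =>
                  p.1 = (fun i => repX t.1 (τ i)) ∧ p.2 = (fun i => ry t (τ i))).card := by
                apply Nat.pos_of_ne_zero
                simpa only [hN] using hNz
              obtain ⟨τ, hτ⟩ := Finset.card_pos.1 hpos
              rw [Finset.mem_filter] at hτ
              obtain ⟨-, h1, h2⟩ := hτ
              have hcn : (1 / n : ℝ) * ∑ i, c (p.1 i, p.2 i)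
                  = (1 / n : ℝ) * ∑ i, c (repX t.1 i, ry t i) := by
                simp only [h1, h2]
                congr 1
                exact Equiv.sum_comp τ (fun i => c (repX t.1 i, ry t i))
              rw [hcn]
              by_cases hα : α < (1 / n : ℝ) * ∑ i, c (repX t.1 i, ry t i)
              · rw [if_pos hα, if_pos (lt_of_lt_of_le hα (hm t ht))]
              · rw [if_neg hα]
                split_ifs with h10
                · exact mul_nonneg (hq0 t) (div_nonneg (Nat.cast_nonneg _) (Nat.cast_nonneg _))
                · exact le_refl 0
          calc ∑ p : (Fin n → X) × (Fin n → Y),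
              (if α < (1 / n : ℝ) * ∑ i, c (p.1 i, p.2 i) then
                q t * ((N t p : ℝ) / (n.factorial : ℝ)) else 0)
              ≤ ∑ p : (Fin n → X) × (Fin n → Y),
                (if α < OTCost c t.1 t.2 then
                  q t * ((N t p : ℝ) / (n.factorial : ℝ)) else 0) :=
                Finset.sum_le_sum fun p _ => hinner p
            _ = (if α < OTCost c t.1 t.2 then q t else 0) := by
                split_ifs with h11
                · rw [← Finset.mul_sum, ← Finset.sum_div, hNtot t, div_self hfacne, mul_one]
                · rw [Finset.sum_const_zero]
      _ = q.sum (fun p v => if α < OTCost c p.1 p.2 then v else 0) := by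
          rw [Finsupp.sum]
  have hAne : Aset.Nonempty := by
    refine ⟨_, ⟨fun p => (∏ i, pX (p.1 i)) * ∏ i, pY (p.2 i), ?_, rfl⟩⟩
    have h1 : IsPMF (fun xs : Fin n → X => ∏ i, pX (xs i)) := by
      refine ⟨fun xs => Finset.prod_nonneg fun i _ => hpX.1 _, ?_⟩
      rw [← Fintype.piFinset_univ, ← Finset.prod_univ_sum]
      simp [hpX.2]
    have h2 : IsPMF (fun ys : Fin n → Y => ∏ i, pY (ys i)) := by
      refine ⟨fun ys => Finset.prod_nonneg fun i _ => hpY.1 _, ?_⟩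
      rw [← Fintype.piFinset_univ, ← Finset.prod_univ_sum]
      simp [hpY.2]
    exact prod_coupling h1 h2
  have hBne : Bset.Nonempty := by
    obtain ⟨r, hr⟩ := hAne
    obtain ⟨s, hs, -⟩ := dir1 r hr
    exact ⟨s, hs⟩
  refine le_antisymm ?_ ?_
  · refine le_csInf hBne fun r hr => ?_
    obtain ⟨s, hsA, hsr⟩ := dir2 r hr
    exact le_trans (csInf_le hAbdd hsA) hsr
  · refine le_csInf hAne fun r hr => ?_
    obtain ⟨s, hsB, hsr⟩ := dir1 r hr
    exact le_trans (csInf_le hBbdd hsB) hsr
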